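/- Let G be a finite group, H and K subgroups of G, α an irreducible character of H, and β an irreducible character of K. Then the inner product [(α^G)_K, β] of the restriction to K of the induced character α^G with β is at least [α_{H∩K}, β_{H∩K}], the inner product of the restrictions of α and β to H ∩ K. -/

import Mathlib

set_option synthInstance.maxHeartbeats 1000000
set_option maxHeartbeats 1000000


open scoped BigOperators Classical ComplexOrder

noncomputable section

/-- Inner product of class functions on a finite group. -/
def charInner (G : Type*) [Group G] [Fintype G] (f g : G → ℂ) : ℂ :=
  (Fintype.card G : ℂ)⁻¹ * ∑ x : G, f x * (starRingEnd ℂ) (g x)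

/-- `χ` is the character of some finite-dimensional complex representation. -/
def IsChar (G : Type*) [Group G] (χ : G → ℂ) : Prop :=
  ∃ (n : ℕ) (ρ : Representation ℂ G (Fin n → ℂ)),
    ∀ g : G, χ g = LinearMap.trace ℂ (Fin n → ℂ) (ρ g)

/-- Irreducible character: a character of norm one. -/
def IsIrrChar (G : Type*) [Group G] [Fintype G] (χ : G → ℂ) : Prop :=
  IsChar G χ ∧ charInner G χ χ = 1

/-- Restriction of a character of `H` to a smaller subgroup `K ≤ H`. -/
def resChar {G : Type*} [Group G] {K H : Subgroup G} (h : K ≤ H) (φ : H → ℂ) :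
    K → ℂ := fun k => φ (Subgroup.inclusion h k)

/-- Induced class function from a subgroup `H` up to `G`. -/
def inducedChar {G : Type*} [Group G] [Fintype G] (H : Subgroup G) (α : H → ℂ) :
    G → ℂ := fun g =>
  (Fintype.card H : ℂ)⁻¹ *
    ∑ x : G, if h : x * g * x⁻¹ ∈ H then α ⟨x * g * x⁻¹, h⟩ else 0

/-- Induced class function from a subgroup `A` up to a larger subgroup `B`. -/
def inducedCharSub {G : Type*} [Group G] [Fintype G] {A B : Subgroup G}
    (_ : A ≤ B) (η : A → ℂ) : B → ℂ := fun b =>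
  (Fintype.card A : ℂ)⁻¹ *
    ∑ x : B, if h : (x : G) * (b : G) * (x : G)⁻¹ ∈ A then η ⟨_, h⟩ else 0

def conjMap {m : ℕ} (f : (Fin m → ℂ) →ₗ[ℂ] (Fin m → ℂ)) : (Fin m → ℂ) →ₗ[ℂ] (Fin m → ℂ) where
  toFun v := star (f (star v))
  map_add' x y := by simp [star_add, map_add]
  map_smul' c x := by simp [star_smul, map_smul]

lemma conjMap_comp {m : ℕ} (f g : (Fin m → ℂ) →ₗ[ℂ] (Fin m → ℂ)) :
    conjMap (f ∘ₗ g) = conjMap f ∘ₗ conjMap g :=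
  LinearMap.ext fun v => by simp [conjMap]

lemma conjMap_id {m : ℕ} : conjMap (LinearMap.id : (Fin m → ℂ) →ₗ[ℂ] _) = LinearMap.id :=
  LinearMap.ext fun v => by simp [conjMap]

lemma trace_pi (m : ℕ) (f : (Fin m → ℂ) →ₗ[ℂ] (Fin m → ℂ)) :
    LinearMap.trace ℂ _ f = ∑ i, f (Pi.basisFun ℂ (Fin m) i) i := by
  rw [LinearMap.trace_eq_matrix_trace ℂ (Pi.basisFun ℂ (Fin m))]
  simp [Matrix.trace, Matrix.diag, LinearMap.toMatrix_apply]

lemma trace_conjMap {m : ℕ} (f : (Fin m → ℂ) →ₗ[ℂ] (Fin m → ℂ)) :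
    LinearMap.trace ℂ _ (conjMap f) = (starRingEnd ℂ) (LinearMap.trace ℂ _ f) := by
  rw [trace_pi, trace_pi, map_sum]
  refine Finset.sum_congr rfl fun i _ => ?_
  have h1 : star (Pi.single i (1:ℂ) : Fin m → ℂ) = Pi.single i 1 := by
    ext j
    simp [Pi.single_apply, apply_ite]
  simp [conjMap, Pi.basisFun_apply, h1]


lemma trace_idem_nonneg {V : Type*} [AddCommGroup V] [Module ℂ V] [FiniteDimensional ℂ V]
    (P : V →ₗ[ℂ] V) (hPP : P * P = P) :
    ∃ r : ℝ, 0 ≤ r ∧ LinearMap.trace ℂ V P = (r : ℂ) := by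
  have hproj : LinearMap.IsProj (LinearMap.range P) P := by
    refine ⟨fun x => LinearMap.mem_range_self P x, fun x hx => ?_⟩
    obtain ⟨y, hy⟩ := hx
    rw [← hy, ← Module.End.mul_apply, hPP]
  refine ⟨Module.finrank ℂ (LinearMap.range P), by positivity, ?_⟩
  rw [hproj.trace]
  norm_num

lemma charInner_nonneg (S : Type*) [Group S] [Fintype S] {χ ψ : S → ℂ}
    (hχ : IsChar S χ) (hψ : IsChar S ψ) :
    ∃ r : ℝ, 0 ≤ r ∧ charInner S χ ψ = (r : ℂ) := by
  obtain ⟨n, ρ, hρ⟩ := hχ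
  obtain ⟨m, σ, hσ⟩ := hψ
  let τ : S → (TensorProduct ℂ (Fin n → ℂ) (Fin m → ℂ) →ₗ[ℂ] TensorProduct ℂ (Fin n → ℂ) (Fin m → ℂ)) :=
    fun s => TensorProduct.map (ρ s) (conjMap (σ s))
  have hτmul : ∀ s t, τ s * τ t = τ (s * t) := by
    intro s t
    show τ s ∘ₗ τ t = TensorProduct.map (ρ (s*t)) (conjMap (σ (s*t)))
    rw [map_mul, map_mul]
    show _ = TensorProduct.map (ρ s ∘ₗ ρ t) (conjMap ((σ s) ∘ₗ (σ t)))
    rw [conjMap_comp, TensorProduct.map_comp]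
  have hcard : (Fintype.card S : ℂ) ≠ 0 := by
    exact_mod_cast Fintype.card_ne_zero
  set P : TensorProduct ℂ (Fin n → ℂ) (Fin m → ℂ) →ₗ[ℂ] TensorProduct ℂ (Fin n → ℂ) (Fin m → ℂ) :=
    (Fintype.card S : ℂ)⁻¹ • ∑ s : S, τ s with hPdef
  have hPτ : ∀ s, τ s * P = P := by
    intro s
    rw [hPdef, mul_smul_comm, Finset.mul_sum]
    congr 1
    refine Fintype.sum_bijective (fun t => s * t) (Group.mulLeft_bijective s) _ _ (fun t => ?_)
    exact hτmul s t
  have hPP : P * P = P := by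
    conv_lhs => rw [hPdef]
    rw [smul_mul_assoc, Finset.sum_mul]
    have : ∑ s : S, τ s * P = (Fintype.card S : ℂ) • P := by
      rw [Finset.sum_congr rfl (fun s _ => hPτ s)]
      simp [Finset.sum_const, Nat.cast_smul_eq_nsmul]
    rw [this, smul_smul, inv_mul_cancel₀ hcard, one_smul]
  have htrace : LinearMap.trace ℂ _ P = charInner S χ ψ := by
    rw [hPdef, map_smul, map_sum]
    have : ∀ s : S, LinearMap.trace ℂ _ (τ s) = χ s * (starRingEnd ℂ) (ψ s) := by
      intro s
      show LinearMap.trace ℂ _ (TensorProduct.map (ρ s) (conjMap (σ s))) = _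
      rw [LinearMap.trace_tensorProduct', trace_conjMap, hρ, hσ]
    rw [Finset.sum_congr rfl (fun s _ => this s)]
    simp [charInner, smul_eq_mul]
  haveI : FiniteDimensional ℂ (TensorProduct ℂ (Fin n → ℂ) (Fin m → ℂ)) :=
    Module.Finite.tensorProduct ℂ _ _
  obtain ⟨r, hr, htr⟩ := trace_idem_nonneg P hPP
  exact ⟨r, hr, by rw [← htrace, htr]⟩

lemma IsChar.comp {S S' : Type*} [Group S] [Group S'] {χ : S → ℂ}
    (h : IsChar S χ) (f : S' →* S) : IsChar S' (fun s => χ (f s)) := by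
  obtain ⟨n, ρ, hρ⟩ := h
  exact ⟨n, ρ.comp f, fun g => hρ (f g)⟩

lemma IsChar.conj_eq {S : Type*} [Group S] {χ : S → ℂ}
    (h : IsChar S χ) (a b : S) : χ (a * b * a⁻¹) = χ b := by
  obtain ⟨n, ρ, hρ⟩ := h
  rw [hρ, hρ]
  have h1 : ρ (a * b * a⁻¹) = (ρ a * ρ b) * ρ a⁻¹ := by rw [map_mul, map_mul]
  rw [h1, LinearMap.trace_mul_comm, ← mul_assoc, ← map_mul, inv_mul_cancel, map_one, one_mul]

def Tfun {G : Type*} [Group G] [Fintype G] (H K : Subgroup G) (α : H → ℂ) (β : K → ℂ)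
    (x : G) : ℂ :=
  (Fintype.card K : ℂ)⁻¹ *
    ∑ k : K, (if h : x * (k : G) * x⁻¹ ∈ H then α ⟨x * (k : G) * x⁻¹, h⟩ else 0) *
      (starRingEnd ℂ) (β k)

lemma shuffle {ι κ : Type*} [Fintype ι] [Fintype κ] (a b : ℂ) (f : ι → κ → ℂ) (g : κ → ℂ) :
    a * ∑ k : κ, ((b * ∑ x : ι, f x k) * g k) = b * ∑ x : ι, a * ∑ k : κ, f x k * g k := by
  simp only [Finset.mul_sum, Finset.sum_mul]
  rw [Finset.sum_comm]
  exact Finset.sum_congr rfl fun x _ => Finset.sum_congr rfl fun k _ => by ring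

lemma stepA {G : Type*} [Group G] [Fintype G] (H K : Subgroup G) (α : H → ℂ) (β : K → ℂ) :
    charInner K (fun k => inducedChar H α (k : G)) β
      = (Fintype.card H : ℂ)⁻¹ * ∑ x : G, Tfun H K α β x := by
  unfold charInner inducedChar Tfun
  exact shuffle _ _ _ _

lemma stepB {G : Type*} [Group G] [Fintype G] (H K : Subgroup G) (α : H → ℂ) (β : K → ℂ)
    (hαc : IsChar H α) (hβc : IsChar K β) (x : G) :
    ∃ r : ℝ, 0 ≤ r ∧ Tfun H K α β x = (r : ℂ) := by
  classical
  let φ : K →* G := ((MulAut.conj x).toMonoidHom).comp K.subtype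
  have hφ : ∀ k : K, φ k = x * (k : G) * x⁻¹ := fun k => rfl
  let Sx : Subgroup K := H.comap φ
  have hmem : ∀ k : K, k ∈ Sx ↔ x * (k : G) * x⁻¹ ∈ H := fun k => Iff.rfl
  let hom : Sx →* H := (φ.comp Sx.subtype).codRestrict H (fun s => s.2)
  have hχ' : IsChar Sx (fun s => α (hom s)) := hαc.comp hom
  have hψ' : IsChar Sx (fun s => β (Sx.subtype s)) := hβc.comp Sx.subtype
  obtain ⟨r, hr, hinner⟩ := charInner_nonneg Sx hχ' hψ'
  refine ⟨(Fintype.card Sx : ℝ) / (Fintype.card K : ℝ) * r, by positivity, ?_⟩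
  have hsum : ∑ k : K,
      (if h : x * (k : G) * x⁻¹ ∈ H then α ⟨x * (k : G) * x⁻¹, h⟩ else 0) * (starRingEnd ℂ) (β k)
      = ∑ s : Sx, α (hom s) * (starRingEnd ℂ) (β (Sx.subtype s)) := by
    rw [← Finset.sum_filter_of_ne (p := fun k => k ∈ Sx) (fun k _ hk => by
      by_contra hns
      exact hk (by rw [dif_neg (fun hin => hns ((hmem k).mpr hin)), zero_mul]))]
    rw [Finset.sum_subtype (p := (· ∈ Sx)) (Finset.univ.filter (· ∈ Sx)) (fun k => by simp) _]
    refine Finset.sum_congr rfl fun s _ => ?_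
    have hs : x * (s : G) * x⁻¹ ∈ H := (hmem s).mp s.2
    rw [dif_pos hs]
    rfl
  have hcardK : (Fintype.card K : ℂ) ≠ 0 := by exact_mod_cast Fintype.card_ne_zero
  have hcardS : (Fintype.card Sx : ℂ) ≠ 0 := by exact_mod_cast Fintype.card_ne_zero
  have : (∑ s : Sx, α (hom s) * (starRingEnd ℂ) (β (Sx.subtype s)))
      = (Fintype.card Sx : ℂ) * charInner Sx (fun s => α (hom s)) (fun s => β (Sx.subtype s)) := by
    rw [charInner, ← mul_assoc, mul_inv_cancel₀ hcardS, one_mul]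
  rw [Tfun, hsum, this, hinner]
  push_cast
  field_simp

lemma stepL {G : Type*} [Group G] [Fintype G] (H K : Subgroup G) (α : H → ℂ) (β : K → ℂ)
    (hαc : IsChar H α) (h : H) (x : G) :
    Tfun H K α β ((h : G) * x) = Tfun H K α β x := by
  unfold Tfun
  congr 1
  refine Finset.sum_congr rfl fun k _ => ?_
  congr 1
  have he : ((h : G) * x) * (k : G) * ((h : G) * x)⁻¹ = (h : G) * (x * (k : G) * x⁻¹) * (h : G)⁻¹ := by
    group
  rw [he]
  have hiff : (h : G) * (x * (k : G) * x⁻¹) * (h : G)⁻¹ ∈ H ↔ x * (k : G) * x⁻¹ ∈ H := by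
    constructor
    · intro hy
      have h2 : x * (k : G) * x⁻¹ = (h : G)⁻¹ * ((h : G) * (x * (k : G) * x⁻¹) * (h : G)⁻¹) * (h : G) := by
        group
      rw [h2]
      exact H.mul_mem (H.mul_mem (H.inv_mem h.2) hy) h.2
    · intro hy
      exact H.mul_mem (H.mul_mem h.2 hy) (H.inv_mem h.2)
  by_cases hc : x * (k : G) * x⁻¹ ∈ H
  · rw [dif_pos hc, dif_pos (hiff.mpr hc)]
    have : (⟨(h : G) * (x * (k : G) * x⁻¹) * (h : G)⁻¹, hiff.mpr hc⟩ : H)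
        = h * ⟨x * (k : G) * x⁻¹, hc⟩ * h⁻¹ := by
      ext
      simp
    rw [this, hαc.conj_eq]
  · rw [dif_neg hc, dif_neg (fun hy => hc (hiff.mp hy))]

lemma stepR {G : Type*} [Group G] [Fintype G] (H K : Subgroup G) (α : H → ℂ) (β : K → ℂ)
    (hβc : IsChar K β) (x : G) (k₀ : K) :
    Tfun H K α β (x * (k₀ : G)) = Tfun H K α β x := by
  unfold Tfun
  congr 1
  have key : ∀ k : K, (x * (k₀ : G)) * (k : G) * (x * (k₀ : G))⁻¹
      = x * ((k₀ * k * k₀⁻¹ : K) : G) * x⁻¹ := by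
    intro k
    push_cast
    group
  refine Fintype.sum_equiv ⟨fun u => k₀ * u * k₀⁻¹, fun u => k₀⁻¹ * u * k₀,
    fun u => by group, fun u => by group⟩ _ _ (fun u => ?_)
  simp only [Equiv.coe_fn_mk, key]
  congr 1
  rw [hβc.conj_eq k₀ u]

lemma stepT1 {G : Type*} [Group G] [Fintype G] (H K : Subgroup G) (α : H → ℂ) (β : K → ℂ) :
    (Fintype.card ↥(H ⊓ K) : ℂ) * charInner ↥(H ⊓ K) (resChar inf_le_left α) (resChar inf_le_right β)
      = (Fintype.card K : ℂ) * Tfun H K α β 1 := by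
  classical
  have hcardK : (Fintype.card K : ℂ) ≠ 0 := by exact_mod_cast Fintype.card_ne_zero
  have hcardHK : (Fintype.card ↥(H ⊓ K) : ℂ) ≠ 0 := by exact_mod_cast Fintype.card_ne_zero
  unfold Tfun charInner
  rw [← mul_assoc, ← mul_assoc, mul_inv_cancel₀ hcardK, mul_inv_cancel₀ hcardHK, one_mul, one_mul]
  have hone : ∀ k : K, (1:G) * (k:G) * (1:G)⁻¹ = (k : G) := by
    intro k; simp
  simp only [hone]
  rw [← Finset.sum_filter_of_ne (p := fun k : K => (k : G) ∈ H) (fun k _ hk => by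
    by_contra hns
    exact hk (by rw [dif_neg hns, zero_mul]))]
  rw [Finset.sum_subtype (p := fun k : K => (k : G) ∈ H) (Finset.univ.filter (fun k : K => (k : G) ∈ H)) (fun k => by simp) _]
  refine Fintype.sum_equiv ⟨fun j : ↥(H ⊓ K) => (⟨⟨(j : G), (Subgroup.mem_inf.mp j.2).2⟩,
      (Subgroup.mem_inf.mp j.2).1⟩ : {k : K // (k : G) ∈ H}),
    fun s => ⟨((s : K) : G), Subgroup.mem_inf.mpr ⟨s.2, (s : K).2⟩⟩,
    fun j => by ext; rfl, fun s => by ext; rfl⟩ _ _ (fun j => ?_)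
  simp only [Equiv.coe_fn_mk]
  rw [dif_pos ((Subgroup.mem_inf.mp j.2).1 : ((⟨(j : G), (Subgroup.mem_inf.mp j.2).2⟩ : K) : G) ∈ H)]
  have e1 : (Subgroup.inclusion (inf_le_left : H ⊓ K ≤ H) j)
      = (⟨(j : G), (Subgroup.mem_inf.mp j.2).1⟩ : H) := by
    ext
    simp [Subgroup.coe_inclusion]
  have e2 : (Subgroup.inclusion (inf_le_right : H ⊓ K ≤ K) j)
      = (⟨(j : G), (Subgroup.mem_inf.mp j.2).2⟩ : K) := by
    ext
    simp [Subgroup.coe_inclusion]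
  show α (Subgroup.inclusion inf_le_left j) *
      (starRingEnd ℂ) (β (Subgroup.inclusion inf_le_right j)) = _
  rw [e1, e2]

lemma stepCount {G : Type*} [Group G] [Fintype G] (H K : Subgroup G) (x : G) :
    ((Finset.univ : Finset (H × K)).filter (fun p => (p.1 : G) * (p.2 : G) = x)).card
      ≤ Fintype.card ↥(H ⊓ K) := by
  classical
  by_cases hx : ∃ p : H × K, (p.1 : G) * (p.2 : G) = x
  · obtain ⟨⟨h₀, k₀⟩, hp₀⟩ := hx
    have hmem : ∀ (p : H × K), (p.1 : G) * (p.2 : G) = x → (h₀ : G)⁻¹ * (p.1 : G) ∈ H ⊓ K := by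
      intro p hp
      refine Subgroup.mem_inf.mpr ⟨H.mul_mem (H.inv_mem h₀.2) p.1.2, ?_⟩
      have e1 : (h₀ : G)⁻¹ * (p.1 : G) = (k₀ : G) * ((p.2 : G))⁻¹ := by
        have e0 : (p.1 : G) * (p.2 : G) = (h₀ : G) * (k₀ : G) := by rw [hp, hp₀]
        calc (h₀ : G)⁻¹ * (p.1 : G)
            = (h₀ : G)⁻¹ * ((p.1 : G) * (p.2 : G)) * ((p.2 : G))⁻¹ := by group
          _ = (h₀ : G)⁻¹ * ((h₀ : G) * (k₀ : G)) * ((p.2 : G))⁻¹ := by rw [e0]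
          _ = (k₀ : G) * ((p.2 : G))⁻¹ := by group
      rw [e1]
      exact K.mul_mem k₀.2 (K.inv_mem p.2.2)
    rw [← Finset.card_univ]
    refine Finset.card_le_card_of_injOn
      (fun p => if hp : (p.1 : G) * (p.2 : G) = x then (⟨(h₀ : G)⁻¹ * (p.1 : G), hmem p hp⟩ : ↥(H ⊓ K)) else 1)
      (fun _ _ => Finset.mem_univ _) ?_
    intro p hp q hq hfpq
    rw [Finset.coe_filter] at hp hq
    obtain ⟨-, hp⟩ := hp
    obtain ⟨-, hq⟩ := hq
    simp only [dif_pos hp, dif_pos hq] at hfpq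
    have h1 : (p.1 : G) = (q.1 : G) := by
      have := congrArg (fun z : ↥(H ⊓ K) => (z : G)) hfpq
      simpa using this
    have hfst : p.1 = q.1 := Subtype.ext h1
    have h2 : (p.2 : G) = (q.2 : G) := by
      have : ((p.1 : G))⁻¹ * ((p.1 : G) * (p.2 : G)) = ((q.1 : G))⁻¹ * ((q.1 : G) * (q.2 : G)) := by
        rw [hp, hq, h1]
      simpa [mul_assoc] using this
    exact Prod.ext hfst (Subtype.ext h2)
  · have hempty : ((Finset.univ : Finset (H × K)).filter (fun p => (p.1 : G) * (p.2 : G) = x)) = ∅ := by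
      rw [Finset.filter_eq_empty_iff]
      intro p _
      exact fun hc => hx ⟨p, hc⟩
    rw [hempty]
    simp

theorem main_aux {G : Type*} [Group G] [Fintype G]
    (H K : Subgroup G) (α : H → ℂ) (β : K → ℂ)
    (hαc : IsChar H α) (hβc : IsChar K β) :
    charInner ↥(H ⊓ K) (resChar inf_le_left α) (resChar inf_le_right β) ≤
      charInner K (fun k => inducedChar H α (k : G)) β := by
  classical
  have hB := stepB H K α β hαc hβc
  choose t ht0 htT using hB
  have hT1 : ∀ (h : H) (k : K), Tfun H K α β ((h : G) * (k : G)) = Tfun H K α β 1 := by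
    intro h k
    rw [stepL H K α β hαc h ((k : G))]
    have := stepR H K α β hβc 1 k
    rwa [one_mul] at this
  set N : G → ℕ := fun x =>
    ((Finset.univ : Finset (H × K)).filter (fun p => (p.1 : G) * (p.2 : G) = x)).card with hN
  have hfiber : ∑ p : H × K, Tfun H K α β ((p.1 : G) * (p.2 : G))
      = ∑ x : G, (N x : ℂ) * Tfun H K α β x := by
    rw [← Finset.sum_fiberwise Finset.univ (fun p : H × K => (p.1 : G) * (p.2 : G))
      (fun p => Tfun H K α β ((p.1 : G) * (p.2 : G)))]
    refine Finset.sum_congr rfl fun x _ => ?_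
    rw [Finset.sum_congr rfl (fun p hp => by rw [(Finset.mem_filter.mp hp).2]),
      Finset.sum_const, nsmul_eq_mul]
  have hpairs : ∑ p : H × K, Tfun H K α β ((p.1 : G) * (p.2 : G))
      = ((Fintype.card H * Fintype.card K : ℕ) : ℂ) * Tfun H K α β 1 := by
    rw [Finset.sum_congr rfl (fun p _ => hT1 p.1 p.2), Finset.sum_const, Finset.card_univ,
      Fintype.card_prod, nsmul_eq_mul]
  have h2 : ((Fintype.card H * Fintype.card K : ℕ) : ℂ) * (t 1 : ℂ)
      = ∑ x : G, (N x : ℂ) * (t x : ℂ) := by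
    calc ((Fintype.card H * Fintype.card K : ℕ) : ℂ) * (t 1 : ℂ)
        = ∑ p : H × K, Tfun H K α β ((p.1 : G) * (p.2 : G)) := by rw [← htT 1]; exact hpairs.symm
      _ = ∑ x : G, (N x : ℂ) * Tfun H K α β x := hfiber
      _ = ∑ x : G, (N x : ℂ) * (t x : ℂ) := Finset.sum_congr rfl fun x _ => by rw [htT x]
  have hreal : ((Fintype.card H * Fintype.card K : ℕ) : ℝ) * t 1 = ∑ x : G, (N x : ℝ) * t x := by
    exact_mod_cast h2
  have hineq : ((Fintype.card H * Fintype.card K : ℕ) : ℝ) * t 1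
      ≤ (Fintype.card ↥(H ⊓ K) : ℝ) * ∑ x : G, t x := by
    rw [hreal, Finset.mul_sum]
    refine Finset.sum_le_sum fun x _ => mul_le_mul_of_nonneg_right ?_ (ht0 x)
    exact_mod_cast stepCount H K x
  have hcardHK : (Fintype.card ↥(H ⊓ K) : ℂ) ≠ 0 := by exact_mod_cast Fintype.card_ne_zero
  have hLHS : charInner ↥(H ⊓ K) (resChar inf_le_left α) (resChar inf_le_right β)
      = (((Fintype.card K : ℝ) / (Fintype.card ↥(H ⊓ K) : ℝ) * t 1 : ℝ) : ℂ) := by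
    have hst := stepT1 H K α β
    rw [htT 1] at hst
    apply mul_left_cancel₀ hcardHK
    rw [hst]
    push_cast
    field_simp
  have hRHS : charInner K (fun k => inducedChar H α (k : G)) β
      = ((((Fintype.card H : ℝ))⁻¹ * ∑ x : G, t x : ℝ) : ℂ) := by
    rw [stepA H K α β, Finset.sum_congr rfl fun x _ => htT x]
    push_cast
    ring
  rw [hLHS, hRHS, Complex.real_le_real]
  have hHpos : (0:ℝ) < Fintype.card H := by exact_mod_cast Fintype.card_pos
  have hHKpos : (0:ℝ) < Fintype.card ↥(H ⊓ K) := by exact_mod_cast Fintype.card_pos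
  rw [div_mul_eq_mul_div, inv_mul_eq_div, div_le_div_iff₀ hHKpos hHpos]
  have hexp : ((Fintype.card H * Fintype.card K : ℕ) : ℝ)
      = (Fintype.card H : ℝ) * (Fintype.card K : ℝ) := by push_cast; ring
  rw [hexp] at hineq
  nlinarith [hineq]

/-- `[(α^G)_K, β] ≥ [α_{H∩K}, β_{H∩K}]` for irreducible characters
`α` of `H` and `β` of `K` (in the partial order on `ℂ`). -/
theorem induced_restrict_inner_ge {G : Type*} [Group G] [Fintype G]
    (H K : Subgroup G) (α : H → ℂ) (β : K → ℂ)
    (hα : IsIrrChar H α) (hβ : IsIrrChar K β) :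
    charInner ↥(H ⊓ K) (resChar inf_le_left α) (resChar inf_le_right β) ≤
      charInner K (fun k => inducedChar H α (k : G)) β :=
  main_aux H K α β hα.1 hβ.1
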